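/- Let Γ be a connected simple graph on vertex set V with |V| ≥ 2, and let α, β be two distinct vertices of Γ. If every induced connected subgraph of Γ on 4 vertices is complete and |V| ≥ 5, then α and β are adjacent in Γ. -/

import Mathlib

private lemma key_step {V : Type*} [Fintype V] (G : SimpleGraph V)
    (hconn : G.Connected)
    (h4 : ∀ S : Finset V, S.card = 4 → (G.induce (S : Set V)).Connected →
      ∀ a ∈ S, ∀ b ∈ S, a ≠ b → G.Adj a b)
    (h5 : 5 ≤ Fintype.card V)
    (a b c : V) (hab : G.Adj a b) (hbc : G.Adj b c) (hac : a ≠ c) :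
    G.Adj a c := by
  classical
  have hab' : a ≠ b := hab.ne
  have hbc' : b ≠ c := hbc.ne
  have hcard3 : ({a, b, c} : Finset V).card ≤ 3 := by
    apply le_trans (Finset.card_insert_le _ _)
    simp [Finset.card_insert_le]
    have := Finset.card_insert_le b ({c} : Finset V); rw [Finset.card_singleton] at this; omega
  have hlt : ({a, b, c} : Finset V).card < Fintype.card V := by omega
  obtain ⟨v, hv⟩ : ∃ v, v ∉ ({a, b, c} : Finset V) := by
    by_contra h
    push_neg at h
    have : (Finset.univ : Finset V) ⊆ {a, b, c} := fun x _ => h x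
    have := Finset.card_le_card this
    simp [Finset.card_univ] at this
    omega
  -- walk from b to v; get boundary dart leaving {a,b,c}
  obtain ⟨w⟩ := hconn b v
  have hbS : b ∈ (({a, b, c} : Finset V) : Set V) := by simp
  have hvS : v ∉ (({a, b, c} : Finset V) : Set V) := by simpa using hv
  obtain ⟨dart, _, hfst, hsnd⟩ := w.exists_boundary_dart _ hbS hvS
  set x := dart.fst with hxdef
  set d := dart.snd with hddef
  have hxd : G.Adj x d := dart.adj
  have hdS : d ∉ ({a, b, c} : Finset V) := by simpa using hsnd
  have hxmem : x = a ∨ x = b ∨ x = c := by simpa using hfst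
  have hda : d ≠ a := by intro h; exact hdS (by simp [h])
  have hdb : d ≠ b := by intro h; exact hdS (by simp [h])
  have hdc : d ≠ c := by intro h; exact hdS (by simp [h])
  set S4 : Finset V := {a, b, c, d} with hS4
  have hcard4 : S4.card = 4 := by
    rw [hS4]
    rw [Finset.card_insert_of_notMem (by simp [hab', hac, hda.symm]),
        Finset.card_insert_of_notMem (by simp [hbc', hdb.symm]),
        Finset.card_insert_of_notMem (by simp [hdc.symm]),
        Finset.card_singleton]
  have haS : a ∈ S4 := by simp [hS4]
  have hbS4 : b ∈ S4 := by simp [hS4]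
  have hcS : c ∈ S4 := by simp [hS4]
  have hdS4 : d ∈ S4 := by simp [hS4]
  have hxS4 : x ∈ S4 := by rcases hxmem with h | h | h <;> simp [hS4, h]
  -- connectivity of induced subgraph
  have hconn4 : (G.induce (S4 : Set V)).Connected := by
    rw [SimpleGraph.connected_iff]
    constructor
    · intro u w
      have hreach : ∀ (y : V) (hy : y ∈ S4),
          (G.induce (S4 : Set V)).Reachable ⟨y, by simpa using hy⟩ ⟨b, by simpa using hbS4⟩ := by
        intro y hy
        have hadjab : (G.induce (S4 : Set V)).Adj ⟨a, by simpa using haS⟩ ⟨b, by simpa using hbS4⟩ := hab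
        have hadjcb : (G.induce (S4 : Set V)).Adj ⟨c, by simpa using hcS⟩ ⟨b, by simpa using hbS4⟩ := hbc.symm
        have hxb : (G.induce (S4 : Set V)).Reachable ⟨x, by simpa using hxS4⟩ ⟨b, by simpa using hbS4⟩ := by
          rcases hxmem with h | h | h
          · subst h; exact hadjab.reachable
          · subst h; exact SimpleGraph.Reachable.refl _
          · subst h; exact hadjcb.reachable
        have hdx : (G.induce (S4 : Set V)).Adj ⟨d, by simpa using hdS4⟩ ⟨x, by simpa using hxS4⟩ := hxd.symm
        have hmem : y = a ∨ y = b ∨ y = c ∨ y = d := by simpa [hS4] using hy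
        rcases hmem with h | h | h | h
        · subst h; exact hadjab.reachable
        · subst h; exact SimpleGraph.Reachable.refl _
        · subst h; exact hadjcb.reachable
        · subst h; exact hdx.reachable.trans hxb
      have hu := hreach u.1 (by simpa using u.2)
      have hw := hreach w.1 (by simpa using w.2)
      exact (hu.trans hw.symm)
    · exact ⟨⟨b, by simpa using hbS4⟩⟩
  exact h4 S4 hcard4 hconn4 a haS c hcS hac

theorem stmt1 {V : Type*} [Fintype V] (G : SimpleGraph V)
    (hconn : G.Connected) (h2 : 2 ≤ Fintype.card V)
    (α β : V) (hne : α ≠ β)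
    (h4 : ∀ S : Finset V, S.card = 4 → (G.induce (S : Set V)).Connected →
      ∀ a ∈ S, ∀ b ∈ S, a ≠ b → G.Adj a b)
    (h5 : 5 ≤ Fintype.card V) :
    G.Adj α β := by
  obtain ⟨w⟩ := hconn α β
  induction w with
  | nil => exact absurd rfl hne
  | @cons u x v h p ih =>
    by_cases hxv : x = v
    · subst hxv; exact h
    · exact key_step G hconn h4 h5 u x v h (ih hxv) hne
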